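/- Let c ∈ (3/2, 5/2] and set β = 2(1 − c/3). Then for every j ≥ 0 and every ε > 0 there exists δ > 0 such that for all μ ∈ (0, δ) and every solution (A_k)_{k≥0} of the rescaled steady-state system with parameter μ satisfying A_k → 0 as k → ∞, one has |A_j − 1| < ε. In other words, every entry of the fixed point converges to 1 as μ → 0⁺. -/

import Mathlib

open Filter

/-- The rescaled steady-state system for the viscous dyadic model:
`A_{j-1}² - A_j A_{j+1} = μ 2^{βj} A_j` for `j ≥ 1`, and `-A_0 A_1 = μ A_0 - 1`. -/
def SteadyState (β μ : ℝ) (A : ℕ → ℝ) : Prop :=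
  (∀ j : ℕ, A j ^ 2 - A (j + 1) * A (j + 2) = μ * (2 : ℝ) ^ (β * ((j : ℝ) + 1)) * A (j + 1)) ∧
  -(A 0 * A 1) = μ * A 0 - 1

private lemma bin_ineq (τ : ℝ) (hτ : 0 ≤ τ) (n : ℕ) :
    1 + (n:ℝ)*τ + ((n:ℝ)*((n:ℝ)-1)/2)*τ^2 ≤ (1+τ)^n := by
  induction n with
  | zero => norm_num
  | succ k ih =>
    have hk0 : (0:ℝ) ≤ (k:ℝ) := Nat.cast_nonneg k
    have hc : (0:ℝ) ≤ (k:ℝ)*((k:ℝ)-1)/2 := by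
      rcases Nat.eq_zero_or_pos k with h | h
      · subst h; norm_num
      · have h1 : (1:ℝ) ≤ (k:ℝ) := by exact_mod_cast h
        nlinarith
    have hmul := mul_le_mul_of_nonneg_right ih (by linarith : (0:ℝ) ≤ 1 + τ)
    rw [pow_succ]
    refine le_trans ?_ hmul
    have h3 : (0:ℝ) ≤ ((k:ℝ)*((k:ℝ)-1)/2) * τ^3 := mul_nonneg hc (by positivity)
    push_cast
    nlinarith [h3, mul_nonneg hk0 hτ]

private lemma step_ineq2 (τ x : ℝ) (hτ0 : 0 < τ) (hτ1 : τ ≤ 1) (hx : 1 ≤ x) :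
    τ^2*x^2/8 ≤ x*τ + (x*(x-1)/2)*τ^2 := by
  have hA : 0 ≤ τ*x*(1-τ) := mul_nonneg (mul_nonneg hτ0.le (by linarith)) (by linarith)
  nlinarith [sq_nonneg (x*τ)]

private lemma step_ineq (τ x : ℝ) (hτ0 : 0 < τ) (hτ1 : τ ≤ 1) (hx : 1 ≤ x) :
    1 + τ*(2*x-1)/4 + τ^2*x^2/8 ≤ (1 + x*τ + (x*(x-1)/2)*τ^2) * (1 + τ*(x-1)/4) := by
  have hA : 0 ≤ τ*x*(1-τ) := mul_nonneg (mul_nonneg hτ0.le (by linarith)) (by linarith)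
  have hB : 0 ≤ (x*τ)^2 := sq_nonneg _
  have hC : 0 ≤ τ^3*(x*(x-1)^2) := by positivity
  nlinarith [hA, hB, hC]

private lemma blowup (β μ : ℝ) (B : ℕ → ℝ) (hβ0 : 0 ≤ β) (hβ1 : β ≤ 1) (hμ : 0 < μ)
    (hB : ∀ n : ℕ, B n ^ 2 = B (n+1) * B (n+2) + μ * (2:ℝ)^(β*(n:ℝ)) * B (n+1))
    (hpos : ∀ n, 0 < B n) (hbound : ∀ n, B n ≤ 1/μ)
    (m : ℕ) (τ : ℝ) (hτ0 : 0 < τ) (hτ1 : τ ≤ 1)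
    (h1 : 1 ≤ B m) (h2 : (1+τ) * B (m+1) ≤ B m) (hμ2 : μ * 2^m ≤ τ^2/8) :
    False := by
  have hc2 : ∀ n : ℕ, (2:ℝ)^(β*(n:ℝ)) ≤ 2^n := by
    intro n
    have hn0 : (0:ℝ) ≤ (n:ℝ) := Nat.cast_nonneg n
    have h := Real.rpow_le_rpow_of_exponent_le one_le_two
      (show β*(n:ℝ) ≤ (n:ℝ) by nlinarith)
    rwa [Real.rpow_natCast] at h
  have hcp : ∀ n : ℕ, (0:ℝ) < (2:ℝ)^(β*(n:ℝ)) := fun n => Real.rpow_pos_of_pos two_pos _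
  have key : ∀ k : ℕ, 1 + τ*((2:ℝ)^k - 1)/4 ≤ B (m+2*k) ∧
      (1+τ)^(2^k) * B (m+2*k+1) ≤ B (m+2*k) := by
    intro k
    induction k with
    | zero =>
      constructor
      · norm_num; exact h1
      · norm_num; exact h2
    | succ k ih =>
      obtain ⟨hg, hr⟩ := ih
      set q := m + 2*k with hq
      obtain ⟨x, hxdef⟩ : ∃ x : ℝ, x = (2:ℝ)^k := ⟨_, rfl⟩
      obtain ⟨P, hPdef⟩ : ∃ P : ℝ, P = ((1+τ):ℝ)^(2^k : ℕ) := ⟨_, rfl⟩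
      rw [← hPdef] at hr
      rw [← hxdef] at hg
      have hx1 : (1:ℝ) ≤ x := by rw [hxdef]; exact one_le_pow₀ (by norm_num)
      have hxpos : (0:ℝ) < x := lt_of_lt_of_le one_pos hx1
      have hBq1 : 1 ≤ B q := by
        have := mul_nonneg hτ0.le (by linarith : (0:ℝ) ≤ x - 1)
        linarith
      have hPn := bin_ineq τ hτ0.le (2^k)
      have hcast : ((2^k : ℕ):ℝ) = x := by rw [hxdef]; push_cast; ring
      rw [hcast, ← hPdef] at hPn
      -- hPn : 1 + x*τ + (x*(x-1)/2)*τ^2 ≤ P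
      have hP0 : (0:ℝ) ≤ P := by rw [hPdef]; positivity
      have hP1 : (1:ℝ) ≤ P := by
        have u1 : (0:ℝ) ≤ x*τ := mul_nonneg hxpos.le hτ0.le
        have u2 : (0:ℝ) ≤ (x*(x-1)/2)*τ^2 :=
          mul_nonneg (by nlinarith : (0:ℝ) ≤ x*(x-1)/2) (sq_nonneg τ)
        linarith
      have e := hB q
      have ha : P * B (q+1) * B q ≤ B q * B q :=
        mul_le_mul_of_nonneg_right hr (hpos q).le
      have hb : μ * (2:ℝ)^(β*(q:ℝ)) * B (q+1) ≤ μ * 2^q * B (q+1) :=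
        mul_le_mul_of_nonneg_right (mul_le_mul_of_nonneg_left (hc2 q) hμ.le) (hpos (q+1)).le
      have hkey0 : (P * B q - μ * 2^q) * B (q+1) ≤ B (q+2) * B (q+1) := by
        linarith [e, ha, hb]
      have hkey : P * B q - μ * 2^q ≤ B (q+2) :=
        le_of_mul_le_mul_right hkey0 (hpos (q+1))
      have h2q : μ * (2:ℝ)^q ≤ τ^2*x^2/8 := by
        have hsplit : (2:ℝ)^q = 2^m * x^2 := by
          rw [hxdef, ← pow_mul, ← pow_add, hq]
          congr 1
          omega
        have h' : μ * ((2:ℝ)^m * x^2) ≤ τ^2/8 * x^2 := by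
          rw [← mul_assoc]
          exact mul_le_mul_of_nonneg_right hμ2 (sq_nonneg x)
        rw [hsplit]
        linarith [h']
      have hstep2 : P * B q - τ^2*x^2/8 ≤ B (q+2) := by linarith
      have hA2 : τ^2*x^2/8 ≤ P - 1 := by
        have := step_ineq2 τ x hτ0 hτ1 hx1
        linarith
      have hmono : B q ≤ B (q+2) := by
        have hprod : 0 ≤ (P - 1) * (B q - 1) :=
          mul_nonneg (by linarith) (by linarith)
        linarith [hstep2, hprod, hA2]
      have hgrow : 1 + τ*((2:ℝ)^(k+1) - 1)/4 ≤ B (q+2) := by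
        have hs := step_ineq τ x hτ0 hτ1 hx1
        have hgnn : (0:ℝ) ≤ 1 + τ*(x-1)/4 := by
          have := mul_nonneg hτ0.le (show (0:ℝ) ≤ x-1 by linarith)
          linarith
        have hmm : (1 + x*τ + (x*(x-1)/2)*τ^2) * (1 + τ*(x-1)/4) ≤ P * B q :=
          mul_le_mul hPn hg hgnn hP0
        have h2x : (2:ℝ)^(k+1) = 2*x := by rw [hxdef, pow_succ]; ring
        rw [h2x]
        linarith [hstep2, hs, hmm]
      have hrat : ((1+τ):ℝ)^(2^(k+1) : ℕ) * B (q+2+1) ≤ B (q+2) := by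
        have e2 : B (q+1)^2 = B (q+2) * B (q+2+1) + μ * (2:ℝ)^(β*((q+1:ℕ):ℝ)) * B (q+2) :=
          hB (q+1)
        have hd : B (q+2) * B (q+2+1) ≤ B (q+1)^2 := by
          have hz : (0:ℝ) < μ * (2:ℝ)^(β*((q+1:ℕ):ℝ)) * B (q+2) :=
            mul_pos (mul_pos hμ (hcp (q+1))) (hpos (q+2))
          linarith
        have hsq : P^2 * B (q+1)^2 ≤ B q^2 := by
          have h := mul_self_le_mul_self (mul_nonneg hP0 (hpos (q+1)).le) hr
          linarith [h]
        have hq2 : B q ^ 2 ≤ B (q+2)^2 := by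
          have := mul_self_le_mul_self (hpos q).le hmono
          linarith [this]
        have hpow2 : ((1+τ):ℝ)^(2^(k+1) : ℕ) = P^2 := by
          rw [hPdef, ← pow_mul, show 2^k*2 = 2^(k+1) from (pow_succ 2 k).symm]
        have hfin : (((1+τ):ℝ)^(2^(k+1) : ℕ) * B (q+2+1)) * B (q+2) ≤ B (q+2) * B (q+2) := by
          rw [hpow2]
          have hd' := mul_le_mul_of_nonneg_left hd (sq_nonneg P)
          linarith [hd', hsq, hq2]
        exact le_of_mul_le_mul_right hfin (hpos (q+2))
      constructor
      · rw [show m+2*(k+1) = q+2 by omega]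
        exact hgrow
      · rw [show m+2*(k+1) = q+2 by omega]
        exact hrat
  obtain ⟨k, hk⟩ := exists_nat_gt (4/(μ*τ) + 1)
  have hk2 : (4/(μ*τ) + 1) < (2:ℝ)^k := by
    refine lt_of_lt_of_le hk ?_
    have := Nat.lt_two_pow_self (n := k)
    have h' : (k:ℝ) < ((2:ℕ)^k : ℝ) := by exact_mod_cast this
    push_cast at h'
    linarith
  have h := (key k).1
  have hb := hbound (m+2*k)
  have hμτ : 0 < μ*τ := mul_pos hμ hτ0
  have h4 : τ/4 * (4/(μ*τ)) = 1/μ := by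
    field_simp
  have h5 : 1/μ < τ/4 * ((2:ℝ)^k - 1) := by
    rw [← h4]
    apply mul_lt_mul_of_pos_left _ (by positivity)
    linarith
  linarith [h, hb, h5]

private lemma Bpos (β μ : ℝ) (B : ℕ → ℝ) (hβ0 : 0 ≤ β) (hμ : 0 < μ)
    (hB : ∀ n : ℕ, B n ^ 2 = B (n+1) * B (n+2) + μ * (2:ℝ)^(β*(n:ℝ)) * B (n+1))
    (hB0 : B 0 = 1) (hlim : Tendsto B atTop (nhds 0)) : ∀ n, 0 < B n := by
  have hcp : ∀ n : ℕ, (0:ℝ) < (2:ℝ)^(β*(n:ℝ)) := fun n => Real.rpow_pos_of_pos two_pos _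
  have hc1 : ∀ n : ℕ, (1:ℝ) ≤ (2:ℝ)^(β*(n:ℝ)) := by
    intro n
    have h := Real.rpow_le_rpow_of_exponent_le one_le_two
      (show (0:ℝ) ≤ β*(n:ℝ) by positivity)
    rwa [Real.rpow_zero] at h
  have hne : ∀ n, B n ≠ 0 := by
    intro n
    induction n with
    | zero => rw [hB0]; norm_num
    | succ k ih =>
      intro h0
      apply ih
      have e := hB k
      rw [h0] at e
      have h2 : B k ^ 2 = 0 := by rw [e]; ring
      exact pow_eq_zero_iff (by norm_num) |>.mp h2
  have hstep : ∀ n, B (n+1) < 0 → B (n+2) ≤ -μ := by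
    intro n hn
    have e := hB n
    have hsq : 0 < B n ^ 2 :=
      lt_of_le_of_ne (sq_nonneg _) (Ne.symm (pow_ne_zero 2 (hne n)))
    have heq : B (n+1) * (B (n+2) + μ*(2:ℝ)^(β*(n:ℝ))) = B n ^ 2 := by
      rw [e]; ring
    have hlt : B (n+2) + μ*(2:ℝ)^(β*(n:ℝ)) < 0 := by
      by_contra hge
      push_neg at hge
      have := mul_nonpos_of_nonpos_of_nonneg hn.le hge
      linarith
    have hmc : μ * 1 ≤ μ * (2:ℝ)^(β*(n:ℝ)) := mul_le_mul_of_nonneg_left (hc1 n) hμ.le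
    linarith
  by_contra hcon
  push_neg at hcon
  obtain ⟨N, hN⟩ := hcon
  have hNlt : B N < 0 := lt_of_le_of_ne hN (hne N)
  rcases N with _ | t
  · rw [hB0] at hNlt; linarith
  · have hneg : ∀ k, B (t+1+k) < 0 := by
      intro k
      induction k with
      | zero => exact hNlt
      | succ k ih =>
        have ih' : B (t+k+1) < 0 := by rw [show t+k+1 = t+1+k by omega]; exact ih
        have h2 := hstep (t+k) ih'
        have : B (t+k+2) < 0 := lt_of_le_of_lt h2 (by linarith)
        rw [show t+1+(k+1) = t+k+2 by omega]
        exact this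
    have hev : ∀ᶠ n in atTop, -μ < B n :=
      hlim.eventually (eventually_gt_nhds (by linarith : -μ < (0:ℝ)))
    rcases eventually_atTop.mp hev with ⟨n₀, hn₀⟩
    have h1 : B (t+1+n₀) < 0 := hneg n₀
    have h2 : B (t+n₀+2) ≤ -μ := hstep (t+n₀) (by rw [show t+n₀+1 = t+1+n₀ by omega]; exact h1)
    have h3 : -μ < B (t+n₀+2) := hn₀ _ (by omega)
    linarith

private lemma Bbound (β μ : ℝ) (B : ℕ → ℝ) (hβ0 : 0 ≤ β) (hμ : 0 < μ) (hμ1 : μ ≤ 1)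
    (hB : ∀ n : ℕ, B n ^ 2 = B (n+1) * B (n+2) + μ * (2:ℝ)^(β*(n:ℝ)) * B (n+1))
    (hB0 : B 0 = 1) (hpos : ∀ n, 0 < B n) : ∀ n, B n ≤ 1/μ := by
  have hcp : ∀ n : ℕ, (0:ℝ) < (2:ℝ)^(β*(n:ℝ)) := fun n => Real.rpow_pos_of_pos two_pos _
  have hc1 : ∀ n : ℕ, (1:ℝ) ≤ (2:ℝ)^(β*(n:ℝ)) := by
    intro n
    have h := Real.rpow_le_rpow_of_exponent_le one_le_two
      (show (0:ℝ) ≤ β*(n:ℝ) by positivity)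
    rwa [Real.rpow_zero] at h
  have hS : ∀ n, B (n+1)^2 * B (n+2) ≤ B n^2 * B (n+1) := by
    intro n
    have e := hB n
    have h1 : B (n+1) * B (n+2) ≤ B n^2 := by
      have := mul_pos (mul_pos hμ (hcp n)) (hpos (n+1))
      linarith
    have := mul_le_mul_of_nonneg_left h1 (hpos (n+1)).le
    nlinarith [this]
  have hS0 : ∀ n, B n^2 * B (n+1) ≤ B 1 := by
    intro n
    induction n with
    | zero => rw [hB0]; norm_num
    | succ k ih => exact le_trans (hS k) ih
  have hB1 : μ * B 1 ≤ 1 := by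
    have e := hB 0
    have h0 : (2:ℝ)^(β*((0:ℕ):ℝ)) = 1 := by norm_num
    rw [hB0, h0] at e
    nlinarith [mul_pos (hpos 1) (hpos 2)]
  have hB1' : B 1 ≤ 1/μ := by rw [le_div_iff₀ hμ]; linarith
  intro n
  match n with
  | 0 => rw [hB0, le_div_iff₀ hμ]; linarith
  | 1 => exact hB1'
  | (k+2) =>
    have e := hB (k+1)
    have e2 : B (k+1)^2 * B (k+2) = B (k+2)^2 * B (k+3) + μ*(2:ℝ)^(β*((k+1:ℕ):ℝ))*B (k+2)^2 := by
      rw [e]; ring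
    have hcge : μ * B (k+2)^2 ≤ μ*(2:ℝ)^(β*((k+1:ℕ):ℝ))*B (k+2)^2 := by
      have hfac : (0:ℝ) ≤ ((2:ℝ)^(β*((k+1:ℕ):ℝ)) - 1) := by linarith [hc1 (k+1)]
      nlinarith [mul_nonneg (mul_nonneg hμ.le hfac) (sq_nonneg (B (k+2)))]
    have hSpos : (0:ℝ) ≤ B (k+2)^2 * B (k+3) := mul_nonneg (sq_nonneg _) (hpos (k+3)).le
    have h3 : μ * B (k+2)^2 ≤ B 1 := by
      have := hS0 (k+1)
      linarith
    have hsq : (μ * B (k+2))^2 ≤ 1 := by nlinarith [mul_le_mul_of_nonneg_left h3 hμ.le]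
    have hmb : 0 < μ * B (k+2) := mul_pos hμ (hpos (k+2))
    rw [le_div_iff₀ hμ]
    nlinarith [hsq, hmb]

theorem stmt_6 (c β : ℝ) (hc : c ∈ Set.Ioc (3 / 2 : ℝ) (5 / 2))
    (hβ : β = 2 * (1 - c / 3)) :
    ∀ j : ℕ, ∀ ε : ℝ, 0 < ε → ∃ δ : ℝ, 0 < δ ∧
      ∀ μ : ℝ, 0 < μ → μ < δ →
        ∀ A : ℕ → ℝ, SteadyState β μ A → Tendsto A atTop (nhds 0) →
          |A j - 1| < ε := by
  classical
  obtain ⟨hcl, hcr⟩ := hc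
  have hβ0 : 0 ≤ β := by rw [hβ]; linarith
  have hβ1 : β ≤ 1 := by rw [hβ]; linarith
  intro j ε hε
  obtain ⟨ε', hε'def⟩ : ∃ x : ℝ, x = min ε (1/2) := ⟨_, rfl⟩
  have hε'0 : 0 < ε' := by rw [hε'def]; exact lt_min hε (by norm_num)
  have hε'2 : ε' ≤ 1/2 := by rw [hε'def]; exact min_le_right _ _
  have hε'ε : ε' ≤ ε := by rw [hε'def]; exact min_le_left _ _
  obtain ⟨s₀, hs₀def⟩ : ∃ x : ℝ, x = ε' / 5^(j+1) := ⟨_, rfl⟩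
  have hs₀0 : 0 < s₀ := by rw [hs₀def]; positivity
  have hs₀2 : s₀ ≤ 1/2 := by
    have h1 : s₀ ≤ ε' := by
      rw [hs₀def]
      exact div_le_self hε'0.le (one_le_pow₀ (by norm_num : (1:ℝ) ≤ 5))
    linarith
  refine ⟨s₀^2/2^(j+9), div_pos (pow_pos hs₀0 2) (by positivity), ?_⟩
  intro μ hμ0 hμδ A hSS hlimA
  obtain ⟨hA1, hA0⟩ := hSS
  obtain ⟨B, hBdef⟩ : ∃ B : ℕ → ℝ, B = fun n => if n = 0 then 1 else A (n-1) := ⟨_, rfl⟩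
  have hB0 : B 0 = 1 := by simp [hBdef]
  have hBsucc : ∀ n : ℕ, B (n+1) = A n := by intro n; simp [hBdef]
  have hB : ∀ n : ℕ, B n ^ 2 = B (n+1) * B (n+2) + μ * (2:ℝ)^(β*(n:ℝ)) * B (n+1) := by
    intro n
    cases n with
    | zero =>
      rw [hB0, hBsucc 0, hBsucc 1]
      have hz : β * ((0:ℕ):ℝ) = 0 := by norm_num
      rw [hz, Real.rpow_zero]
      linarith only [hA0]
    | succ k =>
      rw [hBsucc k, hBsucc (k+1), hBsucc (k+2)]
      have h := hA1 k
      have hcst : ((k+1:ℕ):ℝ) = (k:ℝ)+1 := by push_cast; ring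
      rw [hcst]
      linarith [h]
  have hlimB : Tendsto B atTop (nhds 0) := by
    have hfe : (fun n => B (n+1)) = A := funext hBsucc
    exact (tendsto_add_atTop_iff_nat 1).mp (by rw [hfe]; exact hlimA)
  have hpos := Bpos β μ B hβ0 hμ0 hB hB0 hlimB
  have hμ1 : μ ≤ 1 := by
    have h29 : (1:ℝ) ≤ 2^(j+9) := one_le_pow₀ one_le_two
    have h1 : s₀^2 ≤ 1 := by nlinarith only [hs₀2, hs₀0]
    have h2 : s₀^2/2^(j+9) ≤ s₀^2 := div_le_self (sq_nonneg _) h29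
    linarith only [hμδ, h1, h2]
  have hbound := Bbound β μ B hβ0 hμ0 hμ1 hB hB0 hpos
  have hcpm : ∀ n : ℕ, (0:ℝ) < (2:ℝ)^(β*(n:ℝ)) := fun n => Real.rpow_pos_of_pos two_pos _
  have hc2m : ∀ n : ℕ, (2:ℝ)^(β*(n:ℝ)) ≤ 2^n := by
    intro n
    have hn0 : (0:ℝ) ≤ (n:ℝ) := Nat.cast_nonneg n
    have hb1 := mul_nonneg (sub_nonneg.mpr hβ1) hn0
    have h := Real.rpow_le_rpow_of_exponent_le one_le_two
      (show β*(n:ℝ) ≤ (n:ℝ) by linarith only [hb1])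
    rwa [Real.rpow_natCast] at h
  by_contra hcon
  push_neg at hcon
  have hdev : ε' ≤ |B (j+1) - 1| := by rw [hBsucc j]; exact le_trans hε'ε hcon
  have hex : ∃ i, ε'/5^(j+1-i) ≤ |B i - 1| := ⟨j+1, by simpa using hdev⟩
  have hp := Nat.find_spec hex
  have hple : Nat.find hex ≤ j+1 := Nat.find_min' hex (by simpa using hdev)
  have hp0 : Nat.find hex ≠ 0 := by
    intro h0
    rw [h0, hB0] at hp
    simp at hp
    have : (0:ℝ) < ε'/5^(j+1) := by positivity
    linarith
  obtain ⟨t, hpt⟩ := Nat.exists_eq_succ_of_ne_zero hp0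
  obtain ⟨s, hsdef⟩ : ∃ x : ℝ, x = ε'/5^(j-t) := ⟨_, rfl⟩
  have hs0 : 0 < s := by rw [hsdef]; positivity
  have hpspec : s ≤ |B (t+1) - 1| := by
    rw [hpt, show j+1-(t+1) = j-t by omega] at hp
    rw [hsdef]
    exact hp
  have hprev5 : |B t - 1| < s/5 := by
    have hmin := Nat.find_min hex (show t < Nat.find hex by omega)
    push_neg at hmin
    have h5 : ε'/5^(j+1-t) = s/5 := by
      rw [hsdef, show j+1-t = (j-t)+1 by omega, pow_succ, ← div_div]
    rw [h5] at hmin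
    exact hmin
  have htj : t ≤ j := by omega
  clear hp hple hp0 hpt hex hdev hcon
  have hs12 : s ≤ 1/2 := by
    have h1 : s ≤ ε' := by
      rw [hsdef]
      exact div_le_self hε'0.le (one_le_pow₀ (by norm_num : (1:ℝ) ≤ 5))
    linarith
  have hs₀s : s₀ ≤ s := by
    rw [hs₀def, hsdef]
    gcongr
    · norm_num
    · omega
  -- mu bounds
  have hμkey : μ * 2^(j+2) ≤ s₀^2/128 := by
    have hsplit : (2:ℝ)^(j+9) = 2^(j+2)*2^7 := by
      rw [← pow_add]
    have h0 : (0:ℝ) < (2:ℝ)^(j+2) := by positivity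
    have h1 := mul_lt_mul_of_pos_right hμδ h0
    have heq : s₀^2/2^(j+9) * 2^(j+2) = s₀^2/128 := by
      rw [hsplit]
      field_simp
      ring
    rw [heq] at h1
    linarith only [h1]
  have hss : s₀^2 ≤ s^2 := by
    have := mul_self_le_mul_self hs₀0.le hs₀s
    nlinarith only [this]
  have hpow12 : (2:ℝ)^(t+1) ≤ 2^(j+2) := pow_le_pow_right₀ one_le_two (by omega)
  have hpow22 : (2:ℝ)^(t+2) ≤ 2^(j+2) := pow_le_pow_right₀ one_le_two (by omega)
  have hpow02 : (2:ℝ)^t ≤ 2^(j+2) := pow_le_pow_right₀ one_le_two (by omega)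
  have hmt1 : μ * 2^(t+1) ≤ s^2/8 := by
    have h := mul_le_mul_of_nonneg_left hpow12 hμ0.le
    linarith only [h, hμkey, hss, sq_nonneg s]
  have hmt2 : μ * 2^(t+2) ≤ s^2/128 := by
    have h := mul_le_mul_of_nonneg_left hpow22 hμ0.le
    linarith only [h, hμkey, hss, sq_nonneg s]
  have hmt3 : μ * 2^t ≤ s^2/128 := by
    have h := mul_le_mul_of_nonneg_left hpow02 hμ0.le
    linarith only [h, hμkey, hss, sq_nonneg s]
  -- abs bounds on B t
  obtain ⟨hBt_lo, hBt_up⟩ := abs_lt.mp hprev5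
  -- equation at t
  have et := hB t
  rcases le_or_gt (1+s) (B (t+1)) with hcase | hcase
  · -- Case 1 : B (t+1) ≥ 1 + s
    have hup : B (t+1) * B (t+2) ≤ B t^2 := by
      have hz := mul_pos (mul_pos hμ0 (hcpm t)) (hpos (t+1))
      linarith only [et, hz]
    have hBt2 : B t^2 ≤ (1+s/5)^2 := by
      have hBtle : B t ≤ 1+s/5 := by linarith only [hBt_up]
      have := mul_self_le_mul_self (hpos t).le hBtle
      nlinarith only [this]
    have k1 : (1+s) * (B (t+1) * B (t+2)) ≤ (1+s) * (1+s/5)^2 :=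
      mul_le_mul_of_nonneg_left (le_trans hup hBt2) (by linarith)
    have hss2 : s*s ≤ (1/2)*s := mul_le_mul_of_nonneg_right hs12 hs0.le
    have k2 : (1+s/5)^2 ≤ 1+s := by nlinarith only [hss2, hs0]
    have k2' : (1+s) * (1+s/5)^2 ≤ (1+s)*(1+s) :=
      mul_le_mul_of_nonneg_left k2 (by linarith)
    have k3 : (1+s)*(1+s) ≤ B (t+1)*B (t+1) := mul_self_le_mul_self (by linarith) hcase
    have h5 : ((1+s) * B (t+2)) * B (t+1) ≤ B (t+1) * B (t+1) := by
      nlinarith only [k1, k2', k3]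
    have htrig : (1+s) * B (t+2) ≤ B (t+1) := le_of_mul_le_mul_right h5 (hpos (t+1))
    exact blowup β μ B hβ0 hβ1 hμ0 hB hpos hbound (t+1) s hs0 (by linarith only [hs12])
      (by linarith only [hcase, hs0]) htrig (by linarith only [hmt1])
  · -- Case 2 : B (t+1) ≤ 1 - s
    have hcase2 : B (t+1) ≤ 1 - s := by
      rcases abs_cases (B (t+1) - 1) with ⟨he, _⟩ | ⟨he, _⟩
      · exfalso; rw [he] at hpspec; linarith only [hpspec, hcase]
      · rw [he] at hpspec; linarith only [hpspec]
    have hq1 : μ * (2:ℝ)^(β*(t:ℝ)) * B (t+1) ≤ μ * 2^t := by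
      have h1 : (2:ℝ)^(β*(t:ℝ)) * B (t+1) ≤ 2^t * 1 :=
        mul_le_mul (hc2m t) (by linarith) (hpos (t+1)).le (by positivity)
      calc μ * (2:ℝ)^(β*(t:ℝ)) * B (t+1) = μ * ((2:ℝ)^(β*(t:ℝ)) * B (t+1)) := by ring
      _ ≤ μ * (2^t * 1) := mul_le_mul_of_nonneg_left h1 hμ0.le
      _ = μ * 2^t := by ring
    have hlow : (1-s/5)^2 - μ*2^t ≤ B (t+1) * B (t+2) := by
      have hBt2 : (1-s/5)^2 ≤ B t^2 := by
        have hb1 : 1-s/5 ≤ B t := by linarith only [hBt_lo]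
        have := mul_self_le_mul_self (by linarith only [hs12] : (0:ℝ) ≤ 1-s/5) hb1
        nlinarith only [this]
      linarith only [et, hq1, hBt2]
    have hnum : (1+s/4)*(1-s) ≤ (1-s/5)^2 - s^2/128 := by nlinarith only [hs0, sq_nonneg s]
    have hBbig : 1 + s/4 ≤ B (t+2) := by
      have h1s : (0:ℝ) < 1 - s := by linarith
      have hstep : B (t+1) * B (t+2) ≤ (1-s) * B (t+2) :=
        mul_le_mul_of_nonneg_right hcase2 (hpos (t+2)).le
      have hfin : (1-s)*(1+s/4) ≤ (1-s)*B (t+2) := by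
        linarith only [hlow, hmt3, hnum, hstep]
      exact (mul_le_mul_iff_right₀ h1s).mp hfin
    have e2 : B (t+1)^2 = B (t+2) * B (t+3) + μ*(2:ℝ)^(β*((t+1:ℕ):ℝ))*B (t+2) := hB (t+1)
    have hCup : B (t+2) * B (t+3) ≤ (1-s)^2 := by
      have hz := mul_pos (mul_pos hμ0 (hcpm (t+1))) (hpos (t+2))
      have hB12 : B (t+1)^2 ≤ (1-s)^2 := by
        have := mul_self_le_mul_self (hpos (t+1)).le hcase2
        nlinarith only [this]
      linarith only [e2, hz, hB12]
    have k1 : (1+s/4) * (B (t+2) * B (t+3)) ≤ (1+s/4) * (1-s)^2 :=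
      mul_le_mul_of_nonneg_left hCup (by linarith)
    have hss2 : s*s ≤ (1/2)*s := mul_le_mul_of_nonneg_right hs12 hs0.le
    have h1a : (1-s)^2 ≤ 1+s/4 := by nlinarith only [hss2, hs0]
    have k2 : (1+s/4) * (1-s)^2 ≤ (1+s/4)*(1+s/4) :=
      mul_le_mul_of_nonneg_left h1a (by linarith only [hs0])
    have k3 : (1+s/4)*(1+s/4) ≤ B (t+2)*B (t+2) := mul_self_le_mul_self (by linarith) hBbig
    have h5 : ((1+s/4) * B (t+3)) * B (t+2) ≤ B (t+2) * B (t+2) := by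
      nlinarith only [k1, k2, k3]
    have htrig2 : (1+s/4) * B (t+3) ≤ B (t+2) := le_of_mul_le_mul_right h5 (hpos (t+2))
    exact blowup β μ B hβ0 hβ1 hμ0 hB hpos hbound (t+2) (s/4)
      (by linarith only [hs0]) (by linarith only [hs12])
      (by linarith only [hBbig, hs0]) htrig2 (by linarith only [hmt2])
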